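/- arXiv:1701.07716 — 2 statements merged into one kernel-verified Lean document; each statement's English description precedes it below -/
import Mathlib

section
/- Let R be a commutative noetherian ring and 𝔞 an ideal. In any short exact sequence 0 → M' → M → M'' → 0 of R-modules, if any two of M', M, M'' are 𝔞-cofinite, then so is the third. -/
open CategoryTheory

/-- An `R`-module `M` is `I`-cofinite if its support is contained in `V(I)` and
`Ext^i_R(R/I, M)` is a finitely generated `R`-module for every `i ≥ 0`. -/
def IsCofinite {R : Type} [CommRing R] (I : Ideal R) (M : Type) [AddCommGroup M]
    [Module R M] : Prop :=
  Module.support R M ⊆ PrimeSpectrum.zeroLocus (I : Set R) ∧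
  ∀ i : ℕ, Module.Finite R
    (((Ext R (ModuleCat R) i).obj (Opposite.op (ModuleCat.of R (R ⧸ I)))).obj
      (ModuleCat.of R M))

section Aux

variable {R : Type} [CommRing R]

/-- Transfer `Module.Finite` along an isomorphism in `ModuleCat R`. -/
lemma finite_of_iso {A B : ModuleCat R} (e : A ≅ B) (h : Module.Finite R A) :
    Module.Finite R B :=
  Module.Finite.equiv e.toLinearEquiv

/-- In an exact sequence `A → B → C` of modules over a noetherian ring, if `A` and `C`
are finite, then so is `B`. -/
lemma finite_of_exact_of_finite [IsNoetherianRing R] (S : ShortComplex (ModuleCat R))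
    (hS : S.Exact) (h1 : Module.Finite R S.X₁) (h3 : Module.Finite R S.X₃) :
    Module.Finite R S.X₂ := by
  have : IsNoetherian R S.X₃ := isNoetherian_of_isNoetherianRing_of_finite R S.X₃
  refine ⟨Submodule.fg_of_fg_map_of_fg_inf_ker S.g.hom ?_ ?_⟩
  · exact IsNoetherian.noetherian _
  · rw [top_inf_eq, ← hS.moduleCat_range_eq_ker, LinearMap.range_eq_map]
    exact Submodule.FG.map _ h1.fg_top

/-- The functor `Y ↦ Hom(X, Y)` at the level of cochain complexes obtained from a
chain complex `X`. -/
@[simps]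
noncomputable def lyFunctor (X : ChainComplex (ModuleCat R) ℕ) :
    ModuleCat R ⥤ CochainComplex (ModuleCat R) ℕ where
  obj Y := X.linearYonedaObj R Y
  map {Y Y'} φ :=
    { f := fun i => ((linearYoneda R (ModuleCat R)).map φ).app (Opposite.op (X.X i))
      comm' := by
        intro i j hij
        exact (((linearYoneda R (ModuleCat R)).map φ).naturality (X.d j i).op).symm }
  map_id Y := by
    ext i x
    simp
    rfl
  map_comp φ ψ := by
    ext i x
    simp
    rfl

end Aux

/-- Two-of-three property: in a short exact sequence `0 → M' → M → M'' → 0` of modules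
over a commutative noetherian ring, if any two of `M'`, `M`, `M''` are `I`-cofinite, then
so is the third. -/
theorem cofinite_two_of_three {R : Type} [CommRing R] [IsNoetherianRing R] (I : Ideal R)
    {M' M M'' : Type} [AddCommGroup M'] [Module R M'] [AddCommGroup M] [Module R M]
    [AddCommGroup M''] [Module R M'']
    (f : M' →ₗ[R] M) (g : M →ₗ[R] M'')
    (hf : Function.Injective f) (hg : Function.Surjective g)
    (hfg : Function.Exact f g) :
    (IsCofinite I M' → IsCofinite I M → IsCofinite I M'') ∧
    (IsCofinite I M' → IsCofinite I M'' → IsCofinite I M) ∧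
    (IsCofinite I M → IsCofinite I M'' → IsCofinite I M') := by
  classical
  -- supports
  have hsupp : Module.support R M = Module.support R M' ∪ Module.support R M'' :=
    Module.support_of_exact hfg hf hg
  -- a projective resolution of R/I
  let P : ProjectiveResolution (ModuleCat.of R (R ⧸ I)) :=
    (HasProjectiveResolution.out (Z := ModuleCat.of R (R ⧸ I))).some
  let f' : ModuleCat.of R M' ⟶ ModuleCat.of R M := ModuleCat.ofHom f
  let g' : ModuleCat.of R M ⟶ ModuleCat.of R M'' := ModuleCat.ofHom g
  have hfg' : f' ≫ g' = 0 := by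
    ext x
    exact hfg.apply_apply_eq_zero x
  -- the short exact sequence of Hom complexes
  let S : ShortComplex (CochainComplex (ModuleCat R) ℕ) :=
    ShortComplex.mk ((lyFunctor P.complex).map f') ((lyFunctor P.complex).map g')
      (by
        rw [← Functor.map_comp, hfg']
        ext i u
        simp
        rfl)
  have hm : ∀ i, Mono (S.f.f i) := by
    intro i
    rw [ModuleCat.mono_iff_injective]
    intro u v huv
    have hf' : Mono f' := (ModuleCat.mono_iff_injective f').2 hf
    have : u ≫ f' = v ≫ f' := by
      exact huv
    exact (cancel_mono f').1 this
  have he : ∀ i, Epi (S.g.f i) := by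
    intro i
    rw [ModuleCat.epi_iff_surjective]
    intro w
    have hg' : Epi g' := (ModuleCat.epi_iff_surjective g').2 hg
    refine ⟨Projective.factorThru w g', ?_⟩
    exact Projective.factorThru_comp w g'
  have hex : ∀ i, (S.map (HomologicalComplex.eval _ _ i)).Exact := by
    intro i
    rw [ShortComplex.moduleCat_exact_iff]
    intro u hu
    let u' : P.complex.X i ⟶ ModuleCat.of R M := u
    have hu2 : u' ≫ g' = 0 := hu
    have hu' : ∀ x, g (u' x) = 0 := by
      intro x
      exact congrArg (fun φ => φ.hom x) hu2
    set e := LinearEquiv.ofInjective f hf with he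
    let v : (P.complex.X i) →ₗ[R] M' :=
      e.symm.toLinearMap ∘ₗ LinearMap.codRestrict (LinearMap.range f) u'.hom
        (fun x => (hfg (u' x)).mp (hu' x))
    have hcoe : ∀ c : LinearMap.range f, f (e.symm c) = (c : M) := by
      intro c
      conv_rhs => rw [← e.apply_symm_apply c]
      rw [he]
      exact (LinearEquiv.ofInjective_apply f (e.symm c)).symm
    refine ⟨ModuleCat.ofHom v, ?_⟩
    have heq : ModuleCat.ofHom v ≫ f' = u' := by
      ext x
      exact hcoe ⟨u' x, (hfg (u' x)).mp (hu' x)⟩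
    exact heq
  have hSse : S.ShortExact :=
    HomologicalComplex.shortExact_of_degreewise_shortExact S
      (fun i => { exact := hex i, mono_f := hm i, epi_g := he i })
  -- transfer finiteness through `isoExt`
  have hiso1 : ∀ i : ℕ, (((Ext R (ModuleCat R) i).obj
      (Opposite.op (ModuleCat.of R (R ⧸ I)))).obj (ModuleCat.of R M')) ≅ S.X₁.homology i :=
    fun i => P.isoExt i (ModuleCat.of R M')
  have hiso2 : ∀ i : ℕ, (((Ext R (ModuleCat R) i).obj
      (Opposite.op (ModuleCat.of R (R ⧸ I)))).obj (ModuleCat.of R M)) ≅ S.X₂.homology i :=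
    fun i => P.isoExt i (ModuleCat.of R M)
  have hiso3 : ∀ i : ℕ, (((Ext R (ModuleCat R) i).obj
      (Opposite.op (ModuleCat.of R (R ⧸ I)))).obj (ModuleCat.of R M'')) ≅ S.X₃.homology i :=
    fun i => P.isoExt i (ModuleCat.of R M'')
  refine ⟨fun hM' hM => ⟨?_, fun i => ?_⟩, fun hM' hM'' => ⟨?_, fun i => ?_⟩,
    fun hM hM'' => ⟨?_, fun i => ?_⟩⟩
  · exact (hsupp ▸ Set.subset_union_right).trans hM.1
  · refine finite_of_iso (hiso3 i).symm (finite_of_exact_of_finite _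
      (hSse.homology_exact₃ i (i + 1) rfl) ?_ ?_)
    · exact finite_of_iso (hiso2 i) (hM.2 i)
    · exact finite_of_iso (hiso1 (i + 1)) (hM'.2 (i + 1))
  · rw [hsupp]
    exact Set.union_subset hM'.1 hM''.1
  · refine finite_of_iso (hiso2 i).symm (finite_of_exact_of_finite _
      (hSse.homology_exact₂ i) ?_ ?_)
    · exact finite_of_iso (hiso1 i) (hM'.2 i)
    · exact finite_of_iso (hiso3 i) (hM''.2 i)
  · exact (hsupp ▸ Set.subset_union_left).trans hM.1
  · match i with
    | 0 =>
      have hnotrel : ∀ j, ¬ (ComplexShape.up ℕ).Rel j 0 := by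
        intro j hj
        simp [ComplexShape.up] at hj
      have := hm 0
      have hmono := HomologicalComplex.mono_homologyMap_of_mono_of_not_rel S.f 0 hnotrel
      have hfin2 : Module.Finite R (S.X₂.homology 0) := finite_of_iso (hiso2 0) (hM.2 0)
      have : IsNoetherian R (S.X₂.homology 0) :=
        isNoetherian_of_isNoetherianRing_of_finite R _
      exact finite_of_iso (hiso1 0).symm
        (Module.Finite.of_injective (HomologicalComplex.homologyMap S.f 0).hom
          ((ModuleCat.mono_iff_injective _).1 hmono))
    | (n + 1) =>
      refine finite_of_iso (hiso1 (n + 1)).symm (finite_of_exact_of_finite _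
        (hSse.homology_exact₁ n (n + 1) rfl) ?_ ?_)
      · exact finite_of_iso (hiso3 n) (hM''.2 n)
      · exact finite_of_iso (hiso2 (n + 1)) (hM.2 (n + 1))
end

section
/- Let F : D(R) → D(S) be a triangulated, way-out covariant functor, A an additive subcategory of R-modules, and B an abelian, extension-closed subcategory of S-modules such that H_i(F(M)) ∈ B for every M ∈ A and every i ∈ ℤ. Then for every R-complex X (not necessarily bounded) with H_i(X) ∈ A for all i, one has H_i(F(X)) ∈ B for all i ∈ ℤ. -/
open CategoryTheory Limits DerivedCategory

section WayOut

variable {R S : Type} [CommRing R] [CommRing S]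
  [HasDerivedCategory (ModuleCat.{0} R)] [HasDerivedCategory (ModuleCat.{0} S)]

/-- `F` is way-out left: for every `n` there is an `m` such that if `sup X ≤ m`
(i.e. `Hᵢ(X) = 0` for `i > m`), then `sup F(X) ≤ n`. -/
def WayOutLeft (F : DerivedCategory (ModuleCat R) ⥤ DerivedCategory (ModuleCat S)) :
    Prop :=
  ∀ n : ℤ, ∃ m : ℤ, ∀ X : DerivedCategory (ModuleCat R),
    (∀ i : ℤ, m < i → IsZero ((homologyFunctor (ModuleCat R) i).obj X)) →
    ∀ i : ℤ, n < i → IsZero ((homologyFunctor (ModuleCat S) i).obj (F.obj X))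

/-- `F` is way-out right: for every `n` there is an `m` such that if `inf X ≥ m`
(i.e. `Hᵢ(X) = 0` for `i < m`), then `inf F(X) ≥ n`. -/
def WayOutRight (F : DerivedCategory (ModuleCat R) ⥤ DerivedCategory (ModuleCat S)) :
    Prop :=
  ∀ n : ℤ, ∃ m : ℤ, ∀ X : DerivedCategory (ModuleCat R),
    (∀ i : ℤ, i < m → IsZero ((homologyFunctor (ModuleCat R) i).obj X)) →
    ∀ i : ℤ, i < n → IsZero ((homologyFunctor (ModuleCat S) i).obj (F.obj X))

end WayOut

namespace WayOutAux

open CategoryTheory Limits HomologicalComplex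

section helpers

lemma isIso_of_isZero {C : Type*} [Category C] {A B : C} (h1 : IsZero A) (h2 : IsZero B)
    (φ : A ⟶ B) : IsIso φ := by
  rw [h1.eq_of_src φ (h1.iso h2).hom]
  infer_instance

variable {R : Type} [CommRing R]

lemma moduleCat_isZero_iff (M : ModuleCat.{0} R) : IsZero M ↔ Subsingleton M := by
  constructor
  · intro h
    have hz : ∀ x : M, x = 0 := fun x => by
      have h0 : (𝟙 M : M ⟶ M) = 0 := h.eq_of_src _ _
      calc x = (𝟙 M : M ⟶ M) x := rfl
      _ = (0 : M ⟶ M) x := by rw [h0]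
      _ = 0 := LinearMap.zero_apply x
    exact ⟨fun a b => by rw [hz a, hz b]⟩
  · intro h
    exact ModuleCat.isZero_of_subsingleton M

lemma exactAt_of_isZero_X' {C : Type*} [Category C] [Abelian C]
    (K : CochainComplex C ℤ) (i : ℤ) (h : IsZero (K.X i)) : K.ExactAt i := by
  rw [HomologicalComplex.exactAt_iff]
  exact ShortComplex.exact_of_isZero_X₂ _ h

lemma exactAt_of_isZero_X (K : CochainComplex (ModuleCat.{0} R) ℤ) (i : ℤ)
    (h : IsZero (K.X i)) : K.ExactAt i := exactAt_of_isZero_X' K i h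

lemma exactAt_iff_elem (K : CochainComplex (ModuleCat.{0} R) ℤ) (i : ℤ) :
    K.ExactAt i ↔ ∀ v : K.X i, K.d i (i+1) v = 0 → ∃ y : K.X (i-1), K.d (i-1) i y = v := by
  rw [K.exactAt_iff' (i-1) i (i+1) (by simp) (by simp)]
  exact ShortComplex.moduleCat_exact_iff _

end helpers

section sub

variable {R : Type} [CommRing R]
variable (K : CochainComplex (ModuleCat.{0} R) ℤ) (P : ∀ i : ℤ, Submodule R (K.X i))
  (hP : ∀ i j : ℤ, i + 1 = j → ∀ x ∈ P i, K.d i j x ∈ P j)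

/-- The subcomplex associated to a family of submodules. -/
noncomputable def sub : CochainComplex (ModuleCat.{0} R) ℤ :=
  CochainComplex.of (fun i => ModuleCat.of R (P i))
    (fun i => ModuleCat.ofHom ((K.d i (i+1)).hom.restrict (fun x hx => hP i (i+1) rfl x hx)))
    (fun i => by
      ext x
      simp only [ModuleCat.hom_comp, ModuleCat.hom_ofHom, LinearMap.comp_apply,
        LinearMap.restrict_apply, ModuleCat.hom_zero, LinearMap.zero_apply, ZeroMemClass.coe_zero]
      exact congrArg (fun f : K.X i ⟶ K.X (i+1+1) => f x.1) (K.d_comp_d i (i+1) (i+1+1)))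

lemma sub_d_apply (i j : ℤ) (h : i + 1 = j) (x : (sub K P hP).X i) :
    (P j).subtype ((sub K P hP).d i j x) = K.d i j ((P i).subtype x) := by
  subst h
  simp only [sub, CochainComplex.of_d]
  rfl

/-- The quotient complex associated to a family of submodules. -/
noncomputable def quot : CochainComplex (ModuleCat.{0} R) ℤ :=
  CochainComplex.of (fun i => ModuleCat.of R (K.X i ⧸ P i))
    (fun i => ModuleCat.ofHom (Submodule.mapQ (P i) (P (i+1)) (K.d i (i+1)).hom (fun x hx => hP i (i+1) rfl x hx)))
    (fun i => by
      apply ModuleCat.hom_ext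
      apply Submodule.linearMap_qext
      ext x
      simp only [LinearMap.comp_apply, Submodule.mkQ_apply, ModuleCat.hom_comp,
        Function.comp_apply, Submodule.mapQ_apply]
      change Submodule.Quotient.mk ((K.d i (i+1) ≫ K.d (i+1) (i+1+1)) x) = _
      rw [K.d_comp_d]
      rfl)

lemma quot_d_apply (i j : ℤ) (h : i + 1 = j) (x : K.X i) :
    (quot K P hP).d i j (Submodule.Quotient.mk x) =
      Submodule.Quotient.mk (K.d i j x) := by
  subst h
  unfold quot
  simp only [CochainComplex.of_d]
  rfl

/-- The inclusion of the subcomplex. -/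
noncomputable def subι : sub K P hP ⟶ K where
  f i := ModuleCat.ofHom (P i).subtype
  comm' i j hij := by
    have hij' : (i : ℤ) + 1 = j := hij
    ext x
    change K.d i j ((P i).subtype x) = (P j).subtype ((sub K P hP).d i j x)
    exact (sub_d_apply K P hP i j hij' x).symm

/-- The projection onto the quotient complex. -/
noncomputable def quotπ : K ⟶ quot K P hP where
  f i := ModuleCat.ofHom (P i).mkQ
  comm' i j hij := by
    have hij' : (i : ℤ) + 1 = j := hij
    ext x
    change (quot K P hP).d i j (Submodule.Quotient.mk x) = Submodule.Quotient.mk (K.d i j x)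
    exact quot_d_apply K P hP i j hij' x

/-- The short exact sequence of complexes. -/
noncomputable def ses : ShortComplex (CochainComplex (ModuleCat.{0} R) ℤ) :=
  ShortComplex.mk (subι K P hP) (quotπ K P hP) (by
    ext i x
    change (P i).mkQ ((P i).subtype x) = 0
    simp [Submodule.Quotient.mk_eq_zero, x.2])

lemma ses_shortExact : (ses K P hP).ShortExact := by
  apply HomologicalComplex.shortExact_of_degreewise_shortExact
  intro i
  have hm : Mono (((ses K P hP).map (HomologicalComplex.eval _ _ i)).f) :=
    (ModuleCat.mono_iff_injective _).2 (fun a b hab => Subtype.val_injective hab)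
  have he : Epi (((ses K P hP).map (HomologicalComplex.eval _ _ i)).g) :=
    (ModuleCat.epi_iff_surjective _).2 (Submodule.mkQ_surjective _)
  refine ⟨?_⟩
  rw [ShortComplex.moduleCat_exact_iff]
  intro x₂ hx₂
  change (P i).mkQ x₂ = 0 at hx₂
  replace hx₂ : (show K.X i from x₂) ∈ P i := (Submodule.Quotient.mk_eq_zero (P i)).1 hx₂
  exact ⟨⟨x₂, hx₂⟩, rfl⟩

end sub

section tau

variable {R : Type} [CommRing R]
variable (K : CochainComplex (ModuleCat.{0} R) ℤ) (n : ℤ)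

/-- Submodule family for the good truncation `τ≤n`. -/
noncomputable def tauP (i : ℤ) : Submodule R (K.X i) :=
  if i < n then ⊤ else if i = n then LinearMap.ker (K.d i (i+1)).hom else ⊥

lemma tauP_lt {i : ℤ} (h : i < n) : tauP K n i = ⊤ := if_pos h

lemma tauP_eq {i : ℤ} (h : i = n) : tauP K n i = LinearMap.ker (K.d i (i+1)).hom := by
  unfold tauP
  rw [if_neg (by omega), if_pos h]

lemma tauP_gt {i : ℤ} (h : n < i) : tauP K n i = ⊥ := by
  unfold tauP
  rw [if_neg (by omega), if_neg (by omega)]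

lemma tauP_maps : ∀ i j : ℤ, i + 1 = j → ∀ x ∈ tauP K n i, K.d i j x ∈ tauP K n j := by
  intro i j hij x hx
  subst hij
  rcases lt_trichotomy (i+1) n with h1 | h2 | h3
  · rw [tauP_lt K n h1]; trivial
  · rw [tauP_eq K n h2]
    rw [LinearMap.mem_ker]
    exact congrArg (fun f : K.X i ⟶ K.X (i+1+1) => f x) (K.d_comp_d i (i+1) (i+1+1))
  · rw [tauP_gt K n h3, Submodule.mem_bot]
    rcases lt_trichotomy i n with h4 | h5 | h6
    · omega
    · rw [tauP_eq K n h5, LinearMap.mem_ker] at hx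
      exact hx
    · rw [tauP_gt K n h6, Submodule.mem_bot] at hx
      rw [hx, map_zero]

/-- The truncation `τ≤n` of `K`. -/
noncomputable def tau : CochainComplex (ModuleCat.{0} R) ℤ := sub K (tauP K n) (tauP_maps K n)

/-- The quotient `K/τ≤n K`. -/
noncomputable def tauQ : CochainComplex (ModuleCat.{0} R) ℤ := quot K (tauP K n) (tauP_maps K n)

/-- The short exact sequence `0 → τ≤n K → K → K/τ≤n K → 0`. -/
noncomputable def tauSES : ShortComplex (CochainComplex (ModuleCat.{0} R) ℤ) :=
  ses K (tauP K n) (tauP_maps K n)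

lemma tauSES_shortExact : (tauSES K n).ShortExact := ses_shortExact _ _ _

lemma isZero_tau_X {i : ℤ} (h : n < i) : IsZero ((tau K n).X i) := by
  rw [moduleCat_isZero_iff]
  refine ⟨fun a b => Subtype.ext ?_⟩
  have ha := a.2
  have hb := b.2
  simp only [tauP_gt K n h, Submodule.mem_bot] at ha hb
  rw [ha, hb]

lemma tau_exactAt {i : ℤ} (h : n < i) : (tau K n).ExactAt i :=
  exactAt_of_isZero_X _ _ (isZero_tau_X K n h)

lemma tauQ_exactAt {i : ℤ} (h : i ≤ n) : (tauQ K n).ExactAt i := by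
  rcases lt_or_eq_of_le h with h1 | h2
  · apply exactAt_of_isZero_X
    rw [moduleCat_isZero_iff]
    change Subsingleton (K.X i ⧸ tauP K n i)
    rw [Submodule.Quotient.subsingleton_iff]
    exact tauP_lt K n h1
  · rw [exactAt_iff_elem]
    intro v hv
    obtain ⟨x, rfl⟩ := Submodule.Quotient.mk_surjective _ v
    refine ⟨0, ?_⟩
    rw [map_zero]
    have hv' : Submodule.Quotient.mk (K.d i (i+1) x) =
        (0 : K.X (i+1) ⧸ tauP K n (i+1)) := by
      rw [← quot_d_apply K (tauP K n) (tauP_maps K n) i (i+1) rfl x]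
      exact hv
    rw [Submodule.Quotient.mk_eq_zero, tauP_gt K n (by omega), Submodule.mem_bot] at hv'
    have hx : x ∈ tauP K n i := by
      rw [tauP_eq K n h2, LinearMap.mem_ker]
      exact hv'
    symm
    exact (Submodule.Quotient.mk_eq_zero _).2 hx

end tau

section bd

variable {R : Type} [CommRing R]
variable (L : CochainComplex (ModuleCat.{0} R) ℤ) (n : ℤ)

/-- Submodule family whose subcomplex is acyclic and whose quotient is concentrated
in degree `n`, for a complex supported in degrees `≤ n`. -/
noncomputable def bdP (i : ℤ) : Submodule R (L.X i) :=
  if i < n then ⊤ else LinearMap.range (L.d (i-1) i).hom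

lemma bdP_lt {i : ℤ} (h : i < n) : bdP L n i = ⊤ := if_pos h

lemma bdP_ge {i : ℤ} (h : n ≤ i) : bdP L n i = LinearMap.range (L.d (i-1) i).hom :=
  if_neg (by omega)

lemma bdP_maps : ∀ i j : ℤ, i + 1 = j → ∀ x ∈ bdP L n i, L.d i j x ∈ bdP L n j := by
  intro i j hij x hx
  subst hij
  by_cases h : i + 1 < n
  · rw [bdP_lt L n h]; trivial
  · rw [bdP_ge L n (by omega)]
    have he : i + 1 - 1 = i := by omega
    rw [he]
    exact ⟨x, rfl⟩

/-- The boundary-type subcomplex. -/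
noncomputable def bdSub : CochainComplex (ModuleCat.{0} R) ℤ := sub L (bdP L n) (bdP_maps L n)

/-- The quotient, which will be isomorphic to a single complex. -/
noncomputable def bdQ : CochainComplex (ModuleCat.{0} R) ℤ := quot L (bdP L n) (bdP_maps L n)

/-- The associated short exact sequence. -/
noncomputable def bdSES : ShortComplex (CochainComplex (ModuleCat.{0} R) ℤ) :=
  ses L (bdP L n) (bdP_maps L n)

lemma bdSES_shortExact : (bdSES L n).ShortExact := ses_shortExact _ _ _

lemma bdSub_d_apply (i j : ℤ) (h : i + 1 = j) (x : (bdSub L n).X i) :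
    (bdP L n j).subtype ((bdSub L n).d i j x) = L.d i j ((bdP L n i).subtype x) :=
  sub_d_apply L (bdP L n) (bdP_maps L n) i j h x

lemma bdSub_acyclic (hsupp : ∀ i : ℤ, n < i → IsZero (L.X i))
    (hex : ∀ i : ℤ, i < n → L.ExactAt i) :
    ∀ i : ℤ, (bdSub L n).ExactAt i := by
  intro i
  rcases lt_trichotomy i n with h1 | h2 | h3
  · rw [exactAt_iff_elem]
    intro v hv
    have hv' : L.d i (i+1) ((bdP L n i).subtype v) = 0 := by
      rw [← bdSub_d_apply L n i (i+1) rfl v, hv]; rfl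
    obtain ⟨y, hy⟩ := (exactAt_iff_elem L i).1 (hex i h1) ((bdP L n i).subtype v) hv'
    have hm : y ∈ bdP L n (i-1) := by rw [bdP_lt L n (by omega)]; trivial
    refine ⟨⟨y, hm⟩, Subtype.ext ?_⟩
    show (bdP L n i).subtype ((bdSub L n).d (i-1) i ⟨y, hm⟩) = (bdP L n i).subtype v
    exact (bdSub_d_apply L n (i-1) i (by omega) ⟨y, hm⟩).trans hy
  · rw [exactAt_iff_elem]
    intro v _
    obtain ⟨y, hy⟩ := (SetLike.ext_iff.mp (bdP_ge L n (by omega : n ≤ i)) _).mp v.2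
    have hm : y ∈ bdP L n (i-1) := by rw [bdP_lt L n (by omega)]; trivial
    refine ⟨⟨y, hm⟩, Subtype.ext ?_⟩
    show (bdP L n i).subtype ((bdSub L n).d (i-1) i ⟨y, hm⟩) = (bdP L n i).subtype v
    exact (bdSub_d_apply L n (i-1) i (by omega) ⟨y, hm⟩).trans hy
  · apply exactAt_of_isZero_X
    rw [moduleCat_isZero_iff]
    haveI : Subsingleton (L.X i) := (moduleCat_isZero_iff _).1 (hsupp i h3)
    exact ⟨fun a b => Subtype.ext (Subsingleton.elim _ _)⟩

/-- The module `H` sitting in degree `n` of the quotient. -/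
noncomputable def bdM : ModuleCat.{0} R := ModuleCat.of R (L.X n ⧸ bdP L n n)

lemma isZero_bdQ_X (hsupp : ∀ i : ℤ, n < i → IsZero (L.X i)) {i : ℤ} (h : i ≠ n) :
    IsZero ((bdQ L n).X i) := by
  rw [moduleCat_isZero_iff]
  change Subsingleton (L.X i ⧸ bdP L n i)
  rcases lt_or_gt_of_ne h with h1 | h2
  · rw [Submodule.Quotient.subsingleton_iff]
    exact bdP_lt L n h1
  · haveI : Subsingleton (L.X i) := (moduleCat_isZero_iff _).1 (hsupp i h2)
    refine ⟨fun a b => ?_⟩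
    obtain ⟨x, rfl⟩ := Submodule.Quotient.mk_surjective _ a
    obtain ⟨y, rfl⟩ := Submodule.Quotient.mk_surjective _ b
    rw [Subsingleton.elim x y]

lemma bdQ_d_apply (i j : ℤ) (h : i + 1 = j) (x : L.X i) :
    (bdQ L n).d i j (Submodule.Quotient.mk x) = Submodule.Quotient.mk (L.d i j x) :=
  quot_d_apply L (bdP L n) (bdP_maps L n) i j h x

/-- The isomorphism from the quotient complex to the single complex. -/
noncomputable def bdQIso (hsupp : ∀ i : ℤ, n < i → IsZero (L.X i)) :
    bdQ L n ≅ (HomologicalComplex.single (ModuleCat.{0} R) (ComplexShape.up ℤ) n).obj (bdM L n) := by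
  refine HomologicalComplex.Hom.isoOfComponents (fun i => ?_) (fun i j hij => ?_)
  · by_cases h : i = n
    · subst h
      exact (HomologicalComplex.singleObjXSelf (ComplexShape.up ℤ) i (bdM L i)).symm
    · exact (isZero_bdQ_X L n hsupp h).iso
        (HomologicalComplex.isZero_single_obj_X _ n (bdM L n) i h)
  · have hij' : (i : ℤ) + 1 = j := hij
    by_cases h : j = n
    · rw [HomologicalComplex.single_obj_d, comp_zero]
      have hd : (bdQ L n).d i j = 0 := by
        apply ModuleCat.hom_ext
        apply Submodule.linearMap_qext
        ext x
        change (bdQ L n).d i j (Submodule.Quotient.mk x) = 0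
        rw [bdQ_d_apply L n i j hij' x]
        refine (Submodule.Quotient.mk_eq_zero _).2 ?_
        rw [bdP_ge L n (by omega)]
        have he : j - 1 = i := by omega
        rw [he]
        exact ⟨x, rfl⟩
      rw [hd, zero_comp]
    · apply (HomologicalComplex.isZero_single_obj_X (ComplexShape.up ℤ) n (bdM L n) j h).eq_of_tgt

end bd

section derived

open DerivedCategory ZeroObject

universe w v u

variable {C : Type u} [Category.{v} C] [Abelian C] [HasDerivedCategory.{w} C]

lemma isZero_H_Q_iff (K : CochainComplex C ℤ) (i : ℤ) :
    IsZero ((homologyFunctor C i).obj (Q.obj K)) ↔ K.ExactAt i := by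
  refine Iff.trans ?_ (HomologicalComplex.exactAt_iff_isZero_homology K i).symm
  exact ((homologyFunctorFactors C i).app K).isZero_iff

/-- The homology of `Q.obj K` identifies with the homology of `K`. -/
noncomputable def HQIso (K : CochainComplex C ℤ) (i : ℤ) :
    (homologyFunctor C i).obj (Q.obj K) ≅ K.homology i :=
  (homologyFunctorFactors C i).app K

lemma isZero_Q_obj (K : CochainComplex C ℤ) (hK : ∀ i, K.ExactAt i) :
    IsZero (Q.obj K) := by
  have hz : ∀ i : ℤ, IsZero ((0 : CochainComplex C ℤ).X i) :=
    fun i => (HomologicalComplex.eval C (ComplexShape.up ℤ) i).map_isZero (isZero_zero _)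
  haveI : QuasiIso (0 : K ⟶ 0) := by
    rw [quasiIso_iff]
    intro i
    rw [quasiIsoAt_iff_isIso_homologyMap]
    refine isIso_of_isZero ?_ ?_ _
    · rw [← HomologicalComplex.exactAt_iff_isZero_homology]
      exact hK i
    · rw [← HomologicalComplex.exactAt_iff_isZero_homology]
      exact exactAt_of_isZero_X' _ i (hz i)
  exact IsZero.of_iso (Q.map_isZero (isZero_zero _)) (asIso (Q.map (0 : K ⟶ 0)))

end derived

section extension

universe v₂ u₂

variable {A : Type u₂} [Category.{v₂} A] [Abelian A] (B : A → Prop)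

lemma B_of_exact4
    (hBker : ∀ (M N : A) (f : M ⟶ N), B M → B N → B (kernel f))
    (hBcoker : ∀ (M N : A) (f : M ⟶ N), B M → B N → B (cokernel f))
    (hBext : ∀ (c : ShortComplex A), c.ShortExact → B c.X₁ → B c.X₃ → B c.X₂)
    {M₀ M₁ M₂ M₃ M₄ : A} (f₀ : M₀ ⟶ M₁) (f₁ : M₁ ⟶ M₂) (f₂ : M₂ ⟶ M₃) (f₃ : M₃ ⟶ M₄)
    (w₀ : f₀ ≫ f₁ = 0) (w₁ : f₁ ≫ f₂ = 0) (w₂ : f₂ ≫ f₃ = 0)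
    (h₁ : (ShortComplex.mk f₀ f₁ w₀).Exact) (h₂ : (ShortComplex.mk f₁ f₂ w₁).Exact)
    (h₃ : (ShortComplex.mk f₂ f₃ w₂).Exact)
    (hB₀ : B M₀) (hB₁ : B M₁) (hB₃ : B M₃) (hB₄ : B M₄) : B M₂ := by
  have wg : f₁ ≫ kernel.lift f₃ f₂ w₂ = 0 := by
    rw [← cancel_mono (kernel.ι f₃)]
    simp [w₁]
  have wc : cokernel.desc f₀ f₁ w₀ ≫ kernel.lift f₃ f₂ w₂ = 0 := by
    rw [← cancel_epi (cokernel.π f₀)]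
    simp [wg]
  have hmono : Mono (cokernel.desc f₀ f₁ w₀) :=
    (ShortComplex.mk f₀ f₁ w₀).exact_iff_mono_cokernel_desc.1 h₁
  have hepi : Epi (kernel.lift f₃ f₂ w₂) :=
    (ShortComplex.mk f₂ f₃ w₂).exact_iff_epi_kernel_lift.1 h₃
  have hmid : (ShortComplex.mk f₁ (kernel.lift f₃ f₂ w₂) wg).Exact := by
    let φ : ShortComplex.mk f₁ (kernel.lift f₃ f₂ w₂) wg ⟶ ShortComplex.mk f₁ f₂ w₁ :=
      { τ₁ := 𝟙 _, τ₂ := 𝟙 _, τ₃ := kernel.ι f₃, comm₁₂ := by simp, comm₂₃ := by simp }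
    haveI : Epi φ.τ₁ := by dsimp [φ]; infer_instance
    haveI : IsIso φ.τ₂ := by dsimp [φ]; infer_instance
    haveI : Mono φ.τ₃ := by dsimp [φ]; infer_instance
    exact (ShortComplex.exact_iff_of_epi_of_isIso_of_mono φ).2 h₂
  have hcex : (ShortComplex.mk (cokernel.desc f₀ f₁ w₀) (kernel.lift f₃ f₂ w₂) wc).Exact := by
    let φ : ShortComplex.mk f₁ (kernel.lift f₃ f₂ w₂) wg ⟶
        ShortComplex.mk (cokernel.desc f₀ f₁ w₀) (kernel.lift f₃ f₂ w₂) wc :=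
      { τ₁ := cokernel.π f₀, τ₂ := 𝟙 _, τ₃ := 𝟙 _, comm₁₂ := by simp, comm₂₃ := by simp }
    haveI : Epi φ.τ₁ := by dsimp [φ]; infer_instance
    haveI : IsIso φ.τ₂ := by dsimp [φ]; infer_instance
    haveI : Mono φ.τ₃ := by dsimp [φ]; infer_instance
    exact (ShortComplex.exact_iff_of_epi_of_isIso_of_mono φ).1 hmid
  have hse : (ShortComplex.mk (cokernel.desc f₀ f₁ w₀) (kernel.lift f₃ f₂ w₂) wc).ShortExact :=
    { exact := hcex, mono_f := hmono, epi_g := hepi }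
  exact hBext _ hse (hBcoker _ _ f₀ hB₀ hB₁) (hBker _ _ f₃ hB₃ hB₄)

end extension

section les

open DerivedCategory Pretriangulated

universe w v u

variable {C : Type u} [Category.{v} C] [Abelian C] [HasDerivedCategory.{w} C]

lemma isIso_H_mor₂ (T : Triangle (DerivedCategory C)) (hT : T ∈ distTriang _) (i : ℤ)
    (h1 : IsZero ((DerivedCategory.homologyFunctor C i).obj T.obj₁))
    (h2 : IsZero ((DerivedCategory.homologyFunctor C (i+1)).obj T.obj₁)) :
    IsIso ((DerivedCategory.homologyFunctor C i).map T.mor₂) := by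
  have hm : Mono ((DerivedCategory.homologyFunctor C i).map T.mor₂) :=
    (HomologySequence.mono_homologyMap_mor₂_iff T hT i).2 (h1.eq_of_src _ _)
  have he : Epi ((DerivedCategory.homologyFunctor C i).map T.mor₂) :=
    (HomologySequence.epi_homologyMap_mor₂_iff T hT i (i+1) rfl).2 (h2.eq_of_tgt _ _)
  exact isIso_of_mono_of_epi _

lemma isIso_H_mor₁ (T : Triangle (DerivedCategory C)) (hT : T ∈ distTriang _) (i : ℤ)
    (h1 : IsZero ((DerivedCategory.homologyFunctor C (i-1)).obj T.obj₃))
    (h2 : IsZero ((DerivedCategory.homologyFunctor C i).obj T.obj₃)) :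
    IsIso ((DerivedCategory.homologyFunctor C i).map T.mor₁) := by
  have hm : Mono ((DerivedCategory.homologyFunctor C i).map T.mor₁) :=
    (HomologySequence.mono_homologyMap_mor₁_iff T hT (i-1) i (by omega)).2 (h1.eq_of_src _ _)
  have he : Epi ((DerivedCategory.homologyFunctor C i).map T.mor₁) :=
    (HomologySequence.epi_homologyMap_mor₁_iff T hT i).2 (h2.eq_of_tgt _ _)
  exact isIso_of_mono_of_epi _

lemma B_of_triangle (B : C → Prop)
    (hBker : ∀ (M N : C) (f : M ⟶ N), B M → B N → B (kernel f))
    (hBcoker : ∀ (M N : C) (f : M ⟶ N), B M → B N → B (cokernel f))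
    (hBext : ∀ (c : ShortComplex C), c.ShortExact → B c.X₁ → B c.X₃ → B c.X₂)
    (T : Triangle (DerivedCategory C)) (hT : T ∈ distTriang _)
    (h1 : ∀ j : ℤ, B ((DerivedCategory.homologyFunctor C j).obj T.obj₁))
    (h3 : ∀ j : ℤ, B ((DerivedCategory.homologyFunctor C j).obj T.obj₃)) :
    ∀ j : ℤ, B ((DerivedCategory.homologyFunctor C j).obj T.obj₂) := by
  intro j
  have hδ1 := HomologySequence.exact₁ T hT (j-1) j (by omega)
  have hδ2 := HomologySequence.exact₂ T hT j
  have hδ3 := HomologySequence.exact₃ T hT j (j+1) rfl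
  exact B_of_exact4 B hBker hBcoker hBext _ _ _ _ _ _ _ hδ1 hδ2 hδ3
    (h3 (j-1)) (h1 j) (h3 j) (h1 (j+1))

end les

section main

open DerivedCategory Pretriangulated

variable {R S : Type} [CommRing R] [CommRing S]
  [HasDerivedCategory (ModuleCat.{0} R)] [HasDerivedCategory (ModuleCat.{0} S)]
  (F : DerivedCategory (ModuleCat R) ⥤ DerivedCategory (ModuleCat S))
  [F.CommShift ℤ] [F.IsTriangulated]
  (A : ModuleCat R → Prop) (B : ModuleCat S → Prop)

/-- Homology of a shift. -/
noncomputable def shiftHomIso (Y : DerivedCategory (ModuleCat.{0} S)) (m i : ℤ) :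
    (DerivedCategory.homologyFunctor (ModuleCat S) i).obj (Y⟦m⟧) ≅
      (DerivedCategory.homologyFunctor (ModuleCat S) (m + i)).obj Y :=
  ((DerivedCategory.homologyFunctor (ModuleCat S) 0).shiftIso m i (m+i) rfl).app Y

/-- `Q.obj` of a single complex identifies with the single functor to the derived category. -/
noncomputable def QSingleIso (n : ℤ) (M : ModuleCat.{0} R) :
    Q.obj ((HomologicalComplex.single (ModuleCat.{0} R) (ComplexShape.up ℤ) n).obj M) ≅
      (DerivedCategory.singleFunctor (ModuleCat R) n).obj M :=
  Iso.refl _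

lemma B_single
    (hBiso : ∀ (M N : ModuleCat S), (M ≅ N) → B M → B N)
    (hF : ∀ (M : ModuleCat R), A M → ∀ i : ℤ,
      B ((DerivedCategory.homologyFunctor (ModuleCat S) i).obj
        (F.obj ((DerivedCategory.singleFunctor (ModuleCat R) 0).obj M))))
    (M : ModuleCat R) (hM : A M) (n i : ℤ) :
    B ((DerivedCategory.homologyFunctor (ModuleCat S) i).obj
      (F.obj ((DerivedCategory.singleFunctor (ModuleCat R) n).obj M))) := by
  have e₁ : ((DerivedCategory.singleFunctor (ModuleCat R) 0).obj M)⟦(-n : ℤ)⟧ ≅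
      (DerivedCategory.singleFunctor (ModuleCat R) n).obj M :=
    ((DerivedCategory.singleFunctors (ModuleCat R)).shiftIso (-n) n 0 (by omega)).app M
  have e₂ : F.obj (((DerivedCategory.singleFunctor (ModuleCat R) 0).obj M)⟦(-n : ℤ)⟧) ≅
      (F.obj ((DerivedCategory.singleFunctor (ModuleCat R) 0).obj M))⟦(-n : ℤ)⟧ :=
    (F.commShiftIso (-n : ℤ)).app _
  refine hBiso _ _ (Iso.symm
    ((DerivedCategory.homologyFunctor (ModuleCat S) i).mapIso (F.mapIso e₁.symm) ≪≫
      (DerivedCategory.homologyFunctor (ModuleCat S) i).mapIso e₂ ≪≫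
      shiftHomIso _ (-n) i)) (hF M hM (-n + i))


lemma B_concentrated
    (hAiso : ∀ (M N : ModuleCat R), (M ≅ N) → A M → A N)
    (hBiso : ∀ (M N : ModuleCat S), (M ≅ N) → B M → B N)
    (hF : ∀ (M : ModuleCat R), A M → ∀ i : ℤ,
      B ((DerivedCategory.homologyFunctor (ModuleCat S) i).obj
        (F.obj ((DerivedCategory.singleFunctor (ModuleCat R) 0).obj M))))
    (n : ℤ) (K : CochainComplex (ModuleCat.{0} R) ℤ)
    (hK : ∀ i : ℤ, i ≠ n → K.ExactAt i) (hA : A (K.homology n)) :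
    ∀ i : ℤ, B ((DerivedCategory.homologyFunctor (ModuleCat S) i).obj (F.obj (Q.obj K))) := by
  set T₁ := DerivedCategory.triangleOfSES (tauSES_shortExact K n) with hT₁def
  have hT₁ : T₁ ∈ distTriang _ := DerivedCategory.triangleOfSES_distinguished _
  -- the quotient tauQ K n is acyclic
  have hQt_ac : ∀ i : ℤ, (tauQ K n).ExactAt i := by
    intro i
    by_cases h : i ≤ n
    · exact tauQ_exactAt K n h
    · push_neg at h
      have hz1 : IsZero ((DerivedCategory.homologyFunctor (ModuleCat R) i).obj T₁.obj₁) :=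
        (isZero_H_Q_iff _ _).2 (tau_exactAt K n h)
      have hz2 : IsZero ((DerivedCategory.homologyFunctor (ModuleCat R) (i+1)).obj T₁.obj₁) :=
        (isZero_H_Q_iff _ _).2 (tau_exactAt K n (by omega))
      have := isIso_H_mor₂ T₁ hT₁ i hz1 hz2
      have hzK : IsZero ((DerivedCategory.homologyFunctor (ModuleCat R) i).obj T₁.obj₂) :=
        (isZero_H_Q_iff _ _).2 (hK i (by omega))
      have : IsZero ((DerivedCategory.homologyFunctor (ModuleCat R) i).obj T₁.obj₃) :=
        IsZero.of_iso hzK (asIso ((DerivedCategory.homologyFunctor (ModuleCat R) i).map T₁.mor₂)).symm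
      exact (isZero_H_Q_iff _ _).1 this
  have hzQt : IsZero (Q.obj (tauQ K n)) := isZero_Q_obj _ hQt_ac
  have hIso1 : IsIso T₁.mor₁ := (Triangle.isZero₃_iff_isIso₁ T₁ hT₁).1 hzQt
  have eL : (Q.obj (tau K n) : DerivedCategory (ModuleCat R)) ≅ Q.obj K := @asIso _ _ _ _ T₁.mor₁ hIso1
  -- facts about L := tau K n
  have hsupp : ∀ i : ℤ, n < i → IsZero ((tau K n).X i) := fun i h => isZero_tau_X K n h
  have hexL : ∀ i : ℤ, i < n → (tau K n).ExactAt i := by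
    intro i h
    have hzK : IsZero ((DerivedCategory.homologyFunctor (ModuleCat R) i).obj (Q.obj K)) :=
      (isZero_H_Q_iff _ _).2 (hK i (by omega))
    have : IsZero ((DerivedCategory.homologyFunctor (ModuleCat R) i).obj (Q.obj (tau K n))) :=
      IsZero.of_iso hzK ((DerivedCategory.homologyFunctor (ModuleCat R) i).mapIso eL)
    exact (isZero_H_Q_iff _ _).1 this
  -- second SES
  set T₂ := DerivedCategory.triangleOfSES (bdSES_shortExact (tau K n) n) with hT₂def
  have hT₂ : T₂ ∈ distTriang _ := DerivedCategory.triangleOfSES_distinguished _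
  have hzD : IsZero (Q.obj (bdSub (tau K n) n)) :=
    isZero_Q_obj _ (bdSub_acyclic (tau K n) n hsupp hexL)
  have hIso2 : IsIso T₂.mor₂ := (Triangle.isZero₁_iff_isIso₂ T₂ hT₂).1 hzD
  have e2 : (Q.obj (tau K n) : DerivedCategory (ModuleCat R)) ≅ Q.obj (bdQ (tau K n) n) :=
    @asIso _ _ _ _ T₂.mor₂ hIso2
  have e3 : (Q.obj (bdQ (tau K n) n) : DerivedCategory (ModuleCat R)) ≅
      Q.obj ((HomologicalComplex.single (ModuleCat.{0} R) (ComplexShape.up ℤ) n).obj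
        (bdM (tau K n) n)) :=
    Q.mapIso (bdQIso (tau K n) n hsupp)
  -- the total comparison
  have E : (Q.obj K : DerivedCategory (ModuleCat R)) ≅
      (DerivedCategory.singleFunctor (ModuleCat R) n).obj (bdM (tau K n) n) :=
    eL.symm ≪≫ e2 ≪≫ e3 ≪≫ QSingleIso n (bdM (tau K n) n)
  -- A-membership of bdM
  have hAM : A (bdM (tau K n) n) := by
    refine hAiso _ _ ?_ hA
    refine (HQIso K n).symm ≪≫ ?_ ≪≫ HQIso _ n ≪≫
      HomologicalComplex.singleObjHomologySelfIso (ComplexShape.up ℤ) n (bdM (tau K n) n)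
    exact (DerivedCategory.homologyFunctor (ModuleCat R) n).mapIso (eL.symm ≪≫ e2 ≪≫ e3)
  intro i
  refine hBiso _ _ ?_ (B_single F A B hBiso hF (bdM (tau K n) n) hAM n i)
  exact ((DerivedCategory.homologyFunctor (ModuleCat S) i).mapIso (F.mapIso E)).symm


lemma B_bounded
    (hAiso : ∀ (M N : ModuleCat R), (M ≅ N) → A M → A N)
    (hAzero : A (ModuleCat.of R PUnit))
    (hBiso : ∀ (M N : ModuleCat S), (M ≅ N) → B M → B N)
    (hBker : ∀ (M N : ModuleCat S) (f : M ⟶ N), B M → B N → B (kernel f))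
    (hBcoker : ∀ (M N : ModuleCat S) (f : M ⟶ N), B M → B N → B (cokernel f))
    (hBext : ∀ (c : ShortComplex (ModuleCat S)), c.ShortExact → B c.X₁ → B c.X₃ → B c.X₂)
    (hF : ∀ (M : ModuleCat R), A M → ∀ i : ℤ,
      B ((DerivedCategory.homologyFunctor (ModuleCat S) i).obj
        (F.obj ((DerivedCategory.singleFunctor (ModuleCat R) 0).obj M)))) :
    ∀ (N : ℕ) (a : ℤ) (K : CochainComplex (ModuleCat.{0} R) ℤ),
    (∀ i : ℤ, i < a → K.ExactAt i) → (∀ i : ℤ, a + N < i → K.ExactAt i) →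
    (∀ i : ℤ, A (K.homology i)) →
    ∀ i : ℤ, B ((DerivedCategory.homologyFunctor (ModuleCat S) i).obj (F.obj (Q.obj K))) := by
  intro N
  induction N with
  | zero =>
    intro a K hlo hhi hA
    refine B_concentrated F A B hAiso hBiso hF a K (fun i hi => ?_) (hA a)
    rcases lt_or_gt_of_ne hi with h | h
    · exact hlo i h
    · exact hhi i (by push_cast; omega)
  | succ N ih =>
    intro a K hlo hhi hA
    set t := a + (N : ℤ) with ht
    set T := DerivedCategory.triangleOfSES (tauSES_shortExact K t) with hTdef
    have hT : T ∈ distTriang _ := DerivedCategory.triangleOfSES_distinguished _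
    have hzL : ∀ i : ℤ, t < i →
        IsZero ((DerivedCategory.homologyFunctor (ModuleCat R) i).obj (Q.obj (tau K t))) :=
      fun i hi => (isZero_H_Q_iff _ _).2 (tau_exactAt K t hi)
    have hQtlow : ∀ i : ℤ, i ≤ t → (tauQ K t).ExactAt i := fun i hi => tauQ_exactAt K t hi
    -- homology of the quotient in high degrees
    have eQt : ∀ i : ℤ, t < i → IsIso ((DerivedCategory.homologyFunctor (ModuleCat R) i).map T.mor₂) :=
      fun i hi => isIso_H_mor₂ T hT i (hzL i hi) (hzL (i+1) (by omega))
    have hQt_ac : ∀ i : ℤ, i ≠ t + 1 → (tauQ K t).ExactAt i := by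
      intro i hi
      by_cases h : i ≤ t
      · exact hQtlow i h
      · push_neg at h
        have := eQt i h
        have hzK : IsZero ((DerivedCategory.homologyFunctor (ModuleCat R) i).obj (Q.obj K)) :=
          (isZero_H_Q_iff _ _).2 (hhi i (by push_cast; omega))
        have : IsZero ((DerivedCategory.homologyFunctor (ModuleCat R) i).obj (Q.obj (tauQ K t))) :=
          IsZero.of_iso hzK
            (asIso ((DerivedCategory.homologyFunctor (ModuleCat R) i).map T.mor₂)).symm
        exact (isZero_H_Q_iff _ _).1 this
    have hAQt : A ((tauQ K t).homology (t+1)) := by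
      have := eQt (t+1) (by omega)
      refine hAiso _ _ ?_ (hA (t+1))
      exact (HQIso K (t+1)).symm ≪≫
        (@asIso _ _ _ _ ((DerivedCategory.homologyFunctor (ModuleCat R) (t+1)).map T.mor₂) this) ≪≫
        HQIso _ (t+1)
    have hBQt := B_concentrated F A B hAiso hBiso hF (t+1) (tauQ K t) hQt_ac hAQt
    -- homology of the truncation in low degrees
    have eLiso : ∀ i : ℤ, i ≤ t →
        IsIso ((DerivedCategory.homologyFunctor (ModuleCat R) i).map T.mor₁) := by
      intro i hi
      exact isIso_H_mor₁ T hT i ((isZero_H_Q_iff _ _).2 (hQtlow (i-1) (by omega)))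
        ((isZero_H_Q_iff _ _).2 (hQtlow i hi))
    have hLlow : ∀ i : ℤ, i < a → (tau K t).ExactAt i := by
      intro i hi
      have := eLiso i (by omega)
      have hzK : IsZero ((DerivedCategory.homologyFunctor (ModuleCat R) i).obj (Q.obj K)) :=
        (isZero_H_Q_iff _ _).2 (hlo i hi)
      have : IsZero ((DerivedCategory.homologyFunctor (ModuleCat R) i).obj (Q.obj (tau K t))) :=
        IsZero.of_iso hzK
          (@asIso _ _ _ _ ((DerivedCategory.homologyFunctor (ModuleCat R) i).map T.mor₁) this)
      exact (isZero_H_Q_iff _ _).1 this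
    have hAL : ∀ i : ℤ, A ((tau K t).homology i) := by
      intro i
      by_cases hi : i ≤ t
      · have := eLiso i hi
        refine hAiso _ _ ?_ (hA i)
        exact (HQIso K i).symm ≪≫
          (asIso ((DerivedCategory.homologyFunctor (ModuleCat R) i).map T.mor₁)).symm ≪≫
          HQIso _ i
      · push_neg at hi
        refine hAiso _ _ ?_ hAzero
        have h1 : IsZero (ModuleCat.of R PUnit) := by
          rw [moduleCat_isZero_iff]; infer_instance
        have h2 : IsZero ((tau K t).homology i) := by
          rw [← HomologicalComplex.exactAt_iff_isZero_homology]
          exact tau_exactAt K t hi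
        exact h1.iso h2
    have hBL := ih a (tau K t) hLlow (fun i hi => tau_exactAt K t (by omega)) hAL
    -- conclude via the triangle
    have hTF : F.mapTriangle.obj T ∈ distTriang _ := F.map_distinguished T hT
    intro i
    exact B_of_triangle B hBker hBcoker hBext (F.mapTriangle.obj T) hTF
      (fun j => hBL j) (fun j => hBQt j) i


lemma B_unbounded
    (hFl : ∀ n : ℤ, ∃ m : ℤ, ∀ X : DerivedCategory (ModuleCat R),
      (∀ i : ℤ, m < i → IsZero ((DerivedCategory.homologyFunctor (ModuleCat R) i).obj X)) →
      ∀ i : ℤ, n < i → IsZero ((DerivedCategory.homologyFunctor (ModuleCat S) i).obj (F.obj X)))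
    (hFr : ∀ n : ℤ, ∃ m : ℤ, ∀ X : DerivedCategory (ModuleCat R),
      (∀ i : ℤ, i < m → IsZero ((DerivedCategory.homologyFunctor (ModuleCat R) i).obj X)) →
      ∀ i : ℤ, i < n → IsZero ((DerivedCategory.homologyFunctor (ModuleCat S) i).obj (F.obj X)))
    (hAiso : ∀ (M N : ModuleCat R), (M ≅ N) → A M → A N)
    (hAzero : A (ModuleCat.of R PUnit))
    (hBiso : ∀ (M N : ModuleCat S), (M ≅ N) → B M → B N)
    (hBker : ∀ (M N : ModuleCat S) (f : M ⟶ N), B M → B N → B (kernel f))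
    (hBcoker : ∀ (M N : ModuleCat S) (f : M ⟶ N), B M → B N → B (cokernel f))
    (hBext : ∀ (c : ShortComplex (ModuleCat S)), c.ShortExact → B c.X₁ → B c.X₃ → B c.X₂)
    (hF : ∀ (M : ModuleCat R), A M → ∀ i : ℤ,
      B ((DerivedCategory.homologyFunctor (ModuleCat S) i).obj
        (F.obj ((DerivedCategory.singleFunctor (ModuleCat R) 0).obj M))))
    (K : CochainComplex (ModuleCat.{0} R) ℤ)
    (hKA : ∀ i : ℤ, A (K.homology i)) :
    ∀ i : ℤ, B ((DerivedCategory.homologyFunctor (ModuleCat S) i).obj (F.obj (Q.obj K))) := by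
  intro i₀
  obtain ⟨m₁, hm₁⟩ := hFl (i₀ - 1)
  obtain ⟨m₂, hm₂⟩ := hFr (i₀ + 2)
  set t₁ := m₁ with ht₁
  set t₂ := max (m₂ - 1) (t₁ + 1) with ht₂
  -- first truncation triangle
  set T₁ := DerivedCategory.triangleOfSES (tauSES_shortExact K t₁) with hT₁def
  have hT₁ : T₁ ∈ distTriang _ := DerivedCategory.triangleOfSES_distinguished _
  have hTF₁ : F.mapTriangle.obj T₁ ∈ distTriang _ := F.map_distinguished T₁ hT₁
  have hv₁ : ∀ j : ℤ, i₀ - 1 < j →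
      IsZero ((DerivedCategory.homologyFunctor (ModuleCat S) j).obj
        (F.obj (Q.obj (tau K t₁)))) :=
    hm₁ (Q.obj (tau K t₁))
      (fun j hj => (isZero_H_Q_iff _ _).2 (tau_exactAt K t₁ hj))
  have hIso1 : IsIso ((DerivedCategory.homologyFunctor (ModuleCat S) i₀).map
      (F.mapTriangle.obj T₁).mor₂) :=
    isIso_H_mor₂ (F.mapTriangle.obj T₁) hTF₁ i₀ (hv₁ i₀ (by omega)) (hv₁ (i₀+1) (by omega))
  -- homology of the quotient Qt₁ := tauQ K t₁
  have hzL : ∀ j : ℤ, t₁ < j →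
      IsZero ((DerivedCategory.homologyFunctor (ModuleCat R) j).obj (Q.obj (tau K t₁))) :=
    fun j hj => (isZero_H_Q_iff _ _).2 (tau_exactAt K t₁ hj)
  have eQt : ∀ j : ℤ, t₁ < j →
      IsIso ((DerivedCategory.homologyFunctor (ModuleCat R) j).map T₁.mor₂) :=
    fun j hj => isIso_H_mor₂ T₁ hT₁ j (hzL j hj) (hzL (j+1) (by omega))
  have hAQt : ∀ j : ℤ, A ((tauQ K t₁).homology j) := by
    intro j
    by_cases hj : j ≤ t₁
    · refine hAiso _ _ ?_ hAzero
      have h1 : IsZero (ModuleCat.of R PUnit) := by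
        rw [moduleCat_isZero_iff]; infer_instance
      have h2 : IsZero ((tauQ K t₁).homology j) := by
        rw [← HomologicalComplex.exactAt_iff_isZero_homology]
        exact tauQ_exactAt K t₁ hj
      exact h1.iso h2
    · push_neg at hj
      have := eQt j hj
      refine hAiso _ _ ?_ (hKA j)
      exact (HQIso K j).symm ≪≫
        (@asIso _ _ _ _ ((DerivedCategory.homologyFunctor (ModuleCat R) j).map T₁.mor₂) this) ≪≫ HQIso _ j
  -- second truncation triangle, on Qt₁ := tauQ K t₁
  set T₂ := DerivedCategory.triangleOfSES (tauSES_shortExact (tauQ K t₁) t₂) with hT₂def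
  have hT₂ : T₂ ∈ distTriang _ := DerivedCategory.triangleOfSES_distinguished _
  have hTF₂ : F.mapTriangle.obj T₂ ∈ distTriang _ := F.map_distinguished T₂ hT₂
  have hv₂ : ∀ j : ℤ, j < i₀ + 2 →
      IsZero ((DerivedCategory.homologyFunctor (ModuleCat S) j).obj
        (F.obj (Q.obj (tauQ (tauQ K t₁) t₂)))) :=
    hm₂ (Q.obj (tauQ (tauQ K t₁) t₂))
      (fun j hj => (isZero_H_Q_iff _ _).2 (tauQ_exactAt (tauQ K t₁) t₂ (by omega)))
  have hIso2 : IsIso ((DerivedCategory.homologyFunctor (ModuleCat S) i₀).map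
      (F.mapTriangle.obj T₂).mor₁) :=
    isIso_H_mor₁ (F.mapTriangle.obj T₂) hTF₂ i₀ (hv₂ (i₀-1) (by omega)) (hv₂ i₀ (by omega))
  -- the middle truncation L₂ := tau (tauQ K t₁) t₂ is bounded with homologies in A
  have hQt₂low : ∀ j : ℤ, j ≤ t₂ → (tauQ (tauQ K t₁) t₂).ExactAt j :=
    fun j hj => tauQ_exactAt _ t₂ hj
  have eLiso₂ : ∀ j : ℤ, j ≤ t₂ →
      IsIso ((DerivedCategory.homologyFunctor (ModuleCat R) j).map T₂.mor₁) := by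
    intro j hj
    exact isIso_H_mor₁ T₂ hT₂ j ((isZero_H_Q_iff _ _).2 (hQt₂low (j-1) (by omega)))
      ((isZero_H_Q_iff _ _).2 (hQt₂low j hj))
  have hL₂low : ∀ j : ℤ, j < t₁ + 1 → (tau (tauQ K t₁) t₂).ExactAt j := by
    intro j hj
    have := eLiso₂ j (by omega)
    have hzQ : IsZero ((DerivedCategory.homologyFunctor (ModuleCat R) j).obj
        (Q.obj (tauQ K t₁))) :=
      (isZero_H_Q_iff _ _).2 (tauQ_exactAt K t₁ (by omega))
    have : IsZero ((DerivedCategory.homologyFunctor (ModuleCat R) j).obj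
        (Q.obj (tau (tauQ K t₁) t₂))) :=
      IsZero.of_iso hzQ (@asIso _ _ _ _ ((DerivedCategory.homologyFunctor (ModuleCat R) j).map T₂.mor₁) this)
    exact (isZero_H_Q_iff _ _).1 this
  have hNt : (((t₂ - (t₁+1)).toNat : ℤ)) = t₂ - (t₁+1) := Int.toNat_of_nonneg (by omega)
  have hL₂high : ∀ j : ℤ, (t₁ + 1) + ((t₂ - (t₁+1)).toNat : ℤ) < j →
      (tau (tauQ K t₁) t₂).ExactAt j := by
    intro j hj
    rw [hNt] at hj
    exact tau_exactAt _ t₂ (by omega)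
  have hAL₂ : ∀ j : ℤ, A ((tau (tauQ K t₁) t₂).homology j) := by
    intro j
    by_cases hj : j ≤ t₂
    · have := eLiso₂ j hj
      refine hAiso _ _ ?_ (hAQt j)
      exact (HQIso _ j).symm ≪≫
        (asIso ((DerivedCategory.homologyFunctor (ModuleCat R) j).map T₂.mor₁)).symm ≪≫
        HQIso _ j
    · push_neg at hj
      refine hAiso _ _ ?_ hAzero
      have h1 : IsZero (ModuleCat.of R PUnit) := by
        rw [moduleCat_isZero_iff]; infer_instance
      have h2 : IsZero ((tau (tauQ K t₁) t₂).homology j) := by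
        rw [← HomologicalComplex.exactAt_iff_isZero_homology]
        exact tau_exactAt _ t₂ hj
      exact h1.iso h2
  have hBL₂ := B_bounded F A B hAiso hAzero hBiso hBker hBcoker hBext hF
    ((t₂ - (t₁+1)).toNat) (t₁ + 1) (tau (tauQ K t₁) t₂) hL₂low hL₂high hAL₂
  -- conclude
  refine hBiso _ _ (asIso ((DerivedCategory.homologyFunctor (ModuleCat S) i₀).map
      (F.mapTriangle.obj T₁).mor₂)).symm ?_
  refine hBiso _ _ (@asIso _ _ _ _ ((DerivedCategory.homologyFunctor (ModuleCat S) i₀).map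
      (F.mapTriangle.obj T₂).mor₁) hIso2) ?_
  exact hBL₂ i₀

end main

end WayOutAux

/-- The way-out lemma, unbounded case.  Let `F : D(R) → D(S)` be a triangulated, way-out
covariant functor, `A` an additive subcategory of `R`-modules and `B` an abelian,
extension-closed subcategory of `S`-modules such that all homology of `F(M)` lies in `B`
for every module `M` in `A`.  Then for every (not necessarily bounded) complex `X` whose
homology modules all lie in `A`, all homology modules of `F(X)` lie in `B`. -/
theorem wayOutLemma {R S : Type} [CommRing R] [CommRing S]
    [HasDerivedCategory (ModuleCat.{0} R)] [HasDerivedCategory (ModuleCat.{0} S)]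
    (F : DerivedCategory (ModuleCat R) ⥤ DerivedCategory (ModuleCat S))
    [F.CommShift ℤ] [F.IsTriangulated]
    (hFl : WayOutLeft F) (hFr : WayOutRight F)
    (A : ModuleCat R → Prop) (B : ModuleCat S → Prop)
    -- `A` is an additive subcategory:
    (hAiso : ∀ (M N : ModuleCat R), (M ≅ N) → A M → A N)
    (hAzero : A (ModuleCat.of R PUnit))
    (hAprod : ∀ (M N : ModuleCat R), A M → A N → A (M ⊞ N))
    -- `B` is an abelian subcategory, closed under extensions:
    (hBiso : ∀ (M N : ModuleCat S), (M ≅ N) → B M → B N)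
    (hBzero : B (ModuleCat.of S PUnit))
    (hBker : ∀ (M N : ModuleCat S) (f : M ⟶ N), B M → B N → B (kernel f))
    (hBcoker : ∀ (M N : ModuleCat S) (f : M ⟶ N), B M → B N → B (cokernel f))
    (hBext : ∀ (c : ShortComplex (ModuleCat S)), c.ShortExact →
      B c.X₁ → B c.X₃ → B c.X₂)
    -- homology of `F` of a module in `A` lies in `B`:
    (hF : ∀ (M : ModuleCat R), A M → ∀ i : ℤ,
      B ((homologyFunctor (ModuleCat S) i).obj
        (F.obj ((singleFunctor (ModuleCat R) 0).obj M))))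
    (X : DerivedCategory (ModuleCat R))
    (hXA : ∀ i : ℤ, A ((homologyFunctor (ModuleCat R) i).obj X)) :
    ∀ i : ℤ, B ((homologyFunctor (ModuleCat S) i).obj (F.obj X)) := by
  haveI : (DerivedCategory.Q (C := ModuleCat.{0} R)).EssSurj :=
    Localization.essSurj _ (HomologicalComplex.quasiIso _ _)
  have e : DerivedCategory.Q.obj (DerivedCategory.Q.objPreimage X) ≅ X :=
    DerivedCategory.Q.objObjPreimageIso X
  have hKA : ∀ i : ℤ, A ((DerivedCategory.Q.objPreimage X).homology i) := fun i =>
    hAiso _ _ (WayOutAux.HQIso _ i)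
      (hAiso _ _ ((homologyFunctor (ModuleCat R) i).mapIso e).symm (hXA i))
  intro i
  refine hBiso _ _ ((homologyFunctor (ModuleCat S) i).mapIso (F.mapIso e)) ?_
  exact WayOutAux.B_unbounded F A B hFl hFr hAiso hAzero hBiso hBker hBcoker hBext hF
    (DerivedCategory.Q.objPreimage X) hKA i
end
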